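/- Let g : ℝ → ℝ be a strictly decreasing bijection. Then the set C = {(x,y) ∈ ℝ² : −x + y = g(x + y)} is the graph of a function f : ℝ → ℝ (i.e. for every x there is a unique y with (x,y) ∈ C), and f strictly contracts secant slopes: for all x₁ ≠ x₂, |f(x₁) − f(x₂)| < |x₁ − x₂|. -/

import Mathlib

/-- A constant-`v` contour, given in characteristic coordinates by a strictly
decreasing bijection `Y = g(X)`, is in standard coordinates the graph of a function
`y = f(x)` all of whose secant slopes are strictly less than `1` in magnitude. -/
theorem contour_is_graph_with_contracting_secants
    (g : ℝ → ℝ) (hanti : StrictAnti g) (hbij : Function.Bijective g) :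
    ∃ f : ℝ → ℝ,
      (∀ x y : ℝ, ((x, y) ∈ {p : ℝ × ℝ | -p.1 + p.2 = g (p.1 + p.2)} ↔ y = f x)) ∧
      (∀ x₁ x₂ : ℝ, x₁ ≠ x₂ → |f x₁ - f x₂| < |x₁ - x₂|) := by
  have hngmono : Monotone (fun s => -g s) := fun a b hab => by
    rcases eq_or_lt_of_le hab with rfl | h
    · exact le_rfl
    · exact (neg_le_neg (hanti h).le)
  have hngsurj : Function.Surjective (fun s => -g s) := fun t => by
    obtain ⟨s, hs⟩ := hbij.2 (-t); exact ⟨s, by simp [hs]⟩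
  have hgc : Continuous g := by
    have := hngmono.continuous_of_surjective hngsurj
    simpa only [Pi.neg_def, neg_neg] using this.neg
  set ψ : ℝ → ℝ := fun s => s - g s with hψ
  have hψmono : StrictMono ψ := fun a b hab => sub_lt_sub hab (hanti hab)
  have hψc : Continuous ψ := continuous_id.sub hgc
  have htop : Filter.Tendsto ψ Filter.atTop Filter.atTop := by
    have hng : Filter.Tendsto (fun s => -g s) Filter.atTop Filter.atTop :=
      hngmono.tendsto_atTop_atTop (fun b => (hngsurj b).imp (fun a ha => ha.ge))
    simpa [hψ, sub_eq_add_neg] using Filter.Tendsto.atTop_add_atTop Filter.tendsto_id hng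
  have hbot : Filter.Tendsto ψ Filter.atBot Filter.atBot := by
    have hng : Filter.Tendsto (fun s => -g s) Filter.atBot Filter.atBot :=
      hngmono.tendsto_atBot_atBot (fun b => (hngsurj b).imp (fun a ha => ha.le))
    simpa [hψ, sub_eq_add_neg] using Filter.Tendsto.atBot_add_atBot Filter.tendsto_id hng
  have hψsurj : Function.Surjective ψ := hψc.surjective htop hbot
  set e : ℝ ≃ ℝ := Equiv.ofBijective ψ ⟨hψmono.injective, hψsurj⟩ with he
  refine ⟨fun x => e.symm (2 * x) - x, ?_, ?_⟩
  · intro x y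
    simp only [Set.mem_setOf_eq]
    constructor
    · intro h
      have hψxy : ψ (x + y) = 2 * x := by
        simp only [hψ]
        rw [← h]; ring
      have : e.symm (2 * x) = x + y := by
        rw [← hψxy]; exact e.symm_apply_apply (x + y)
      rw [this]; ring
    · intro h
      have h1 : x + y = e.symm (2 * x) := by rw [h]; ring
      have h2 : ψ (x + y) = 2 * x := by
        rw [h1]; exact e.apply_symm_apply (2 * x)
      have : (x + y) - g (x + y) = 2 * x := h2
      linarith
  · intro x₁ x₂ hne
    wlog hlt : x₁ < x₂ generalizing x₁ x₂
    · rw [abs_sub_comm (e.symm (2*x₁) - x₁), abs_sub_comm x₁]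
      exact this x₂ x₁ hne.symm (lt_of_le_of_ne (not_lt.mp hlt) hne.symm)
    set s₁ := e.symm (2 * x₁)
    set s₂ := e.symm (2 * x₂)
    have hs₁ : s₁ - g s₁ = 2 * x₁ := e.apply_symm_apply (2 * x₁)
    have hs₂ : s₂ - g s₂ = 2 * x₂ := e.apply_symm_apply (2 * x₂)
    have hslt : s₁ < s₂ := by
      by_contra h
      have : ψ s₂ ≤ ψ s₁ := hψmono.monotone (not_lt.mp h)
      have h2 : (2:ℝ) * x₂ ≤ 2 * x₁ := by
        simpa [hψ, hs₁, hs₂] using this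
      linarith
    have hglt : g s₂ < g s₁ := hanti hslt
    have ha : (0:ℝ) < s₂ - s₁ := by linarith
    have hb : (0:ℝ) < g s₁ - g s₂ := by linarith
    show |s₁ - x₁ - (s₂ - x₂)| < |x₁ - x₂|
    rw [abs_of_neg (by linarith : x₁ - x₂ < 0), abs_lt]
    constructor <;> linarith
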